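/- Every 3×3 complex matrix of rank 2 can be written as a product of at most 4 Toeplitz matrices. -/

import Mathlib

def IsToeplitz {n : ℕ} (M : Matrix (Fin n) (Fin n) ℂ) : Prop :=
  ∀ (i j : Fin n) (hi : (i : ℕ) + 1 < n) (hj : (j : ℕ) + 1 < n),
    M i j = M ⟨i + 1, hi⟩ ⟨j + 1, hj⟩

open Matrix

lemma isToeplitz_lit (a b c d e : ℂ) : IsToeplitz !![a,b,c;d,a,b;e,d,a] := by
  intro i j hi hj
  fin_cases i <;> fin_cases j <;> first | rfl | (norm_num at hi; done) | (norm_num at hj; done)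

noncomputable def Nmat : Matrix (Fin 3) (Fin 3) ℂ := !![0,1,0;0,0,1;0,0,0]

lemma isToeplitz_N : IsToeplitz Nmat := isToeplitz_lit 0 1 0 0 0

lemma isToeplitz_transpose {T : Matrix (Fin 3) (Fin 3) ℂ} (hT : IsToeplitz T) :
    IsToeplitz Tᵀ := by
  intro i j hi hj
  simpa only [Matrix.transpose_apply] using hT j i hj hi

lemma prod_reverse_map_transpose (l : List (Matrix (Fin 3) (Fin 3) ℂ)) :
    ((l.map Matrix.transpose).reverse).prod = (l.prod)ᵀ := by
  induction l with
  | nil => simp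
  | cons a l ih =>
      simp [List.prod_concat, ih, Matrix.transpose_mul]

lemma lemma2 (R : Matrix (Fin 3) (Fin 3) ℂ) (h20 : R 2 0 = 0) (h21 : R 2 1 = 0) (h22 : R 2 2 = 0)
    (h : R 0 1 ≠ 0 ∨ R 0 2 ≠ 0 ∨ R 1 2 ≠ 0 ∨ R 0 0 = R 1 1) :
    ∃ T2 T3 : Matrix (Fin 3) (Fin 3) ℂ,
      IsToeplitz T2 ∧ IsToeplitz T3 ∧ Nmat * (T2 * T3) = R := by
  by_cases hα : R 1 2 - R 0 1 ≠ 0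
  · obtain ⟨d, hd⟩ : ∃ x : ℂ, x * (R 1 2 - R 0 1) = R 0 2 - (R 1 1 - R 0 0) :=
      ⟨_, div_mul_cancel₀ _ hα⟩
    obtain ⟨q, hq⟩ : ∃ x : ℂ, x = R 0 2 - d*(R 1 2 - R 0 1) := ⟨_, rfl⟩
    obtain ⟨p, hp⟩ : ∃ x : ℂ, x = R 0 1 - d*q := ⟨_, rfl⟩
    obtain ⟨s, hs⟩ : ∃ x : ℂ, x = R 0 0 - d*p := ⟨_, rfl⟩
    obtain ⟨t, ht⟩ : ∃ x : ℂ, x = R 1 0 - p - d*s := ⟨_, rfl⟩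
    refine ⟨!![1,0,0; d,1,0; 1,d,1], !![p,q,R 1 2 - R 0 1; s,p,q; t,s,p],
      isToeplitz_lit 1 0 0 d 1, isToeplitz_lit p q (R 1 2 - R 0 1) s t, ?_⟩
    ext i j
    fin_cases i <;> fin_cases j <;>
      simp [Nmat, Matrix.mul_apply, Fin.sum_univ_three, h20, h21, h22] <;>
      first
        | linear_combination hs
        | linear_combination hp
        | linear_combination hq
        | linear_combination ht
        | linear_combination hq + hs - hd
  · push_neg at hα
    have h12 : R 1 2 = R 0 1 := by linear_combination hα
    by_cases h13 : R 0 2 ≠ 0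
    · obtain ⟨e, he⟩ : ∃ x : ℂ, x * R 0 2 = R 1 1 - R 0 0 := ⟨_, div_mul_cancel₀ _ h13⟩
      refine ⟨!![1,0,0; 0,1,0; e,0,1],
        !![R 0 1, R 0 2, 0; R 0 0, R 0 1, R 0 2; R 1 0 - e * R 0 1, R 0 0, R 0 1],
        isToeplitz_lit 1 0 0 0 e,
        isToeplitz_lit (R 0 1) (R 0 2) 0 (R 0 0) (R 1 0 - e * R 0 1), ?_⟩
      ext i j
      fin_cases i <;> fin_cases j <;>
        simp [Nmat, Matrix.mul_apply, Fin.sum_univ_three, h20, h21, h22, h12] <;>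
        first
          | ring1
          | linear_combination he
    · push_neg at h13
      by_cases hβ : R 1 1 - R 0 0 = 0
      · have h11 : R 1 1 = R 0 0 := by linear_combination hβ
        refine ⟨!![1,0,0; 0,1,0; 0,0,1],
          !![R 0 1, R 0 2, 0; R 0 0, R 0 1, R 0 2; R 1 0, R 0 0, R 0 1],
          isToeplitz_lit 1 0 0 0 0,
          isToeplitz_lit (R 0 1) (R 0 2) 0 (R 0 0) (R 1 0), ?_⟩
        ext i j
        fin_cases i <;> fin_cases j <;>
          simp [Nmat, Matrix.mul_apply, Fin.sum_univ_three, h20, h21, h22, h12, h11]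
      · have h01 : R 0 1 ≠ 0 := by
          rcases h with h | h | h | h
          · exact h
          · exact absurd h13 h
          · rw [h12] at h; exact h
          · exact absurd (by linear_combination -h) hβ
        obtain ⟨e, he⟩ : ∃ x : ℂ, x * R 0 1 = R 1 1 - R 0 0 := ⟨_, div_mul_cancel₀ _ h01⟩
        refine ⟨!![0,0,0; 1,0,0; e,1,0],
          !![R 0 0, R 0 1, R 0 2; R 1 0 - e * R 0 0, R 0 0, R 0 1; 0, R 1 0 - e * R 0 0, R 0 0],
          isToeplitz_lit 0 0 0 1 e,
          isToeplitz_lit (R 0 0) (R 0 1) (R 0 2) (R 1 0 - e * R 0 0) 0, ?_⟩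
        ext i j
        fin_cases i <;> fin_cases j <;>
          simp [Nmat, Matrix.mul_apply, Fin.sum_univ_three, h20, h21, h22, h12, h13] <;>
          first
            | ring1
            | linear_combination he

lemma lemma1 (w : Fin 3 → ℂ) (hw : w ≠ 0) :
    ∃ T S : Matrix (Fin 3) (Fin 3) ℂ, ∃ c : ℂ,
      IsToeplitz T ∧ T * S = 1 ∧ (∀ j, S 2 j = c * w j) := by
  by_cases h2 : w 2 ≠ 0
  · obtain ⟨d, hd⟩ : ∃ x : ℂ, x * w 2 = -(w 1) := ⟨_, div_mul_cancel₀ _ h2⟩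
    obtain ⟨e, he⟩ : ∃ x : ℂ, x * w 2 = -(w 0) - w 1 * d := ⟨_, div_mul_cancel₀ _ h2⟩
    refine ⟨!![1,0,0; d,1,0; e,d,1], !![1,0,0; -d,1,0; d*d-e, -d, 1], (w 2)⁻¹,
      isToeplitz_lit 1 0 0 d e, ?_, ?_⟩
    · ext i j
      fin_cases i <;> fin_cases j <;>
        simp [Matrix.mul_apply, Fin.sum_univ_three, Matrix.one_apply, Matrix.vecHead, Matrix.vecTail, -mul_eq_zero] <;>
        try ring1
    · intro j
      fin_cases j
      · show d*d-e = (w 2)⁻¹ * w 0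
        rw [inv_mul_eq_div, eq_div_iff h2]
        linear_combination d*hd - he
      · show -d = (w 2)⁻¹ * w 1
        rw [inv_mul_eq_div, eq_div_iff h2]
        linear_combination -hd
      · show (1:ℂ) = (w 2)⁻¹ * w 2
        rw [inv_mul_cancel₀ h2]
  · push_neg at h2
    by_cases h1 : w 1 ≠ 0
    · obtain ⟨t, ht⟩ : ∃ x : ℂ, x * w 1 = w 0 := ⟨_, div_mul_cancel₀ _ h1⟩
      refine ⟨!![-t, 1, 0; t*t, -t, 1; 1-t*t*t, t*t, -t], !![0,t,1; 1,t*t,t; t,1,0], (w 1)⁻¹,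
        isToeplitz_lit (-t) 1 0 (t*t) (1-t*t*t), ?_, ?_⟩
      · ext i j
        fin_cases i <;> fin_cases j <;>
          simp [Matrix.mul_apply, Fin.sum_univ_three, Matrix.one_apply, Matrix.vecHead, Matrix.vecTail, -mul_eq_zero] <;>
          try ring1
      · intro j
        fin_cases j
        · show t = (w 1)⁻¹ * w 0
          rw [inv_mul_eq_div, eq_div_iff h1]
          exact ht
        · show (1:ℂ) = (w 1)⁻¹ * w 1
          rw [inv_mul_cancel₀ h1]
        · show (0:ℂ) = (w 1)⁻¹ * w 2
          rw [h2, mul_zero]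
    · push_neg at h1
      have h0 : w 0 ≠ 0 := by
        intro h0
        exact hw (funext fun j => by fin_cases j <;> assumption)
      refine ⟨!![0,0,1; 1,0,0; 0,1,0], !![0,1,0; 0,0,1; 1,0,0], (w 0)⁻¹,
        isToeplitz_lit 0 0 1 1 0, ?_, ?_⟩
      · ext i j
        fin_cases i <;> fin_cases j <;>
          simp [Matrix.mul_apply, Fin.sum_univ_three, Matrix.one_apply, Matrix.vecHead, Matrix.vecTail, -mul_eq_zero]
      · intro j
        fin_cases j
        · show (1:ℂ) = (w 0)⁻¹ * w 0
          rw [inv_mul_cancel₀ h0]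
        · show (0:ℂ) = (w 0)⁻¹ * w 1
          rw [h1, mul_zero]
        · show (0:ℂ) = (w 0)⁻¹ * w 2
          rw [h2, mul_zero]

lemma ML (M : Matrix (Fin 3) (Fin 3) ℂ) (hdet : M.det = 0)
    (hc : ¬(M 0 2 = 0 ∧ M 1 2 = 0 ∧ M 2 2 = 0)) :
    ∃ L : List (Matrix (Fin 3) (Fin 3) ℂ),
      L.length ≤ 4 ∧ (∀ T ∈ L, IsToeplitz T) ∧ L.prod = M := by
  obtain ⟨w, hw, hwM⟩ := Matrix.exists_vecMul_eq_zero_iff.mpr hdet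
  obtain ⟨T, S, c, hT, hTS, hS⟩ := lemma1 w hw
  set R := S * M with hRdef
  have hMR : M = T * R := by rw [hRdef, ← Matrix.mul_assoc, hTS, Matrix.one_mul]
  have hrow : ∀ j, R 2 j = 0 := by
    intro j
    have h := congrFun hwM j
    simp [Matrix.vecMul, dotProduct, Fin.sum_univ_three] at h
    show (S * M) 2 j = 0
    simp [Matrix.mul_apply, Fin.sum_univ_three, hS]
    linear_combination c * h
  have h2 : R 0 2 ≠ 0 ∨ R 1 2 ≠ 0 := by
    by_contra hcon
    push_neg at hcon
    refine hc ⟨?_, ?_, ?_⟩ <;>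
    · rw [hMR]
      simp [Matrix.mul_apply, Fin.sum_univ_three, hcon.1, hcon.2, hrow 2]
  obtain ⟨T2, T3, hT2, hT3, hprod⟩ :=
    lemma2 R (hrow 0) (hrow 1) (hrow 2) (Or.inr (h2.imp_right Or.inl))
  refine ⟨[T, Nmat, T2, T3], by simp, ?_, ?_⟩
  · intro X hX
    simp only [List.mem_cons, List.not_mem_nil, or_false] at hX
    rcases hX with rfl | rfl | rfl | rfl
    exacts [hT, isToeplitz_N, hT2, hT3]
  · simp only [List.prod_cons, List.prod_nil, Matrix.mul_one]
    rw [hprod]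
    exact hMR.symm

theorem rank_two_3x3_product_of_at_most_four_toeplitz
    (M : Matrix (Fin 3) (Fin 3) ℂ) (hM : M.rank = 2) :
    ∃ L : List (Matrix (Fin 3) (Fin 3) ℂ),
      L.length ≤ 4 ∧ (∀ T ∈ L, IsToeplitz T) ∧ L.prod = M := by
  have hdet : M.det = 0 := by
    by_contra h
    have : M.rank = 3 := by
      simpa using Matrix.rank_of_isUnit M (Matrix.isUnit_iff_isUnit_det M |>.mpr (Ne.isUnit h))
    omega
  by_cases hc : M 0 2 = 0 ∧ M 1 2 = 0 ∧ M 2 2 = 0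
  · by_cases hr : M 2 0 = 0 ∧ M 2 1 = 0 ∧ M 2 2 = 0
    · -- third row and column vanish
      obtain ⟨hc0, hc1, hc2⟩ := hc
      obtain ⟨hr0, hr1, hr2⟩ := hr
      by_cases hbd : M 0 1 = 0 ∧ M 1 1 = 0
      · -- contradiction with rank 2
        exfalso
        have hfac : M = (!![M 0 0; M 1 0; 0] : Matrix (Fin 3) (Fin 1) ℂ) *
            (!![1,0,0] : Matrix (Fin 1) (Fin 3) ℂ) := by
          ext i j
          fin_cases i <;> fin_cases j <;>
            simp [Matrix.mul_apply, hc0, hc1, hc2, hr0, hr1, hbd.1, hbd.2]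
        have hle : M.rank ≤ 1 := by
          rw [hfac]
          calc ((!![M 0 0; M 1 0; 0] : Matrix (Fin 3) (Fin 1) ℂ) *
              (!![1,0,0] : Matrix (Fin 1) (Fin 3) ℂ)).rank
              ≤ (!![(1:ℂ),0,0] : Matrix (Fin 1) (Fin 3) ℂ).rank := Matrix.rank_mul_le_right _ _
            _ ≤ 1 := by
                simpa using Matrix.rank_le_card_height (!![(1:ℂ),0,0] : Matrix (Fin 1) (Fin 3) ℂ)
        omega
      · -- make R 0 1 nonzero via a shear
        obtain ⟨g, hg⟩ : ∃ g : ℂ, M 0 1 - g * M 1 1 ≠ 0 := by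
          by_cases hd : M 1 1 = 0
          · refine ⟨0, ?_⟩
            simp only [zero_mul, sub_zero]
            intro hb
            exact hbd ⟨hb, hd⟩
          · exact ⟨(M 0 1 - 1)/(M 1 1), by rw [div_mul_cancel₀ _ hd]; norm_num⟩
        have hTS : (!![1,g,0; 0,1,g; 0,0,1] : Matrix (Fin 3) (Fin 3) ℂ) *
            !![1,-g,g*g; 0,1,-g; 0,0,1] = 1 := by
          ext i j
          fin_cases i <;> fin_cases j <;>
            simp [Matrix.mul_apply, Fin.sum_univ_three, Matrix.one_apply, Matrix.vecHead, Matrix.vecTail, -mul_eq_zero] <;>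
            try ring1
        set S : Matrix (Fin 3) (Fin 3) ℂ := !![1,-g,g*g; 0,1,-g; 0,0,1] with hSdef
        set R := S * M with hRdef
        have hrow : ∀ j, R 2 j = 0 := by
          intro j
          show (S * M) 2 j = 0
          fin_cases j <;>
            simp [hSdef, Matrix.mul_apply, Fin.sum_univ_three, hr0, hr1, hr2]
        have h01 : R 0 1 ≠ 0 := by
          show (S * M) 0 1 ≠ 0
          have : (S * M) 0 1 = M 0 1 - g * M 1 1 := by
            simp [hSdef, Matrix.mul_apply, Fin.sum_univ_three, hr1]
            ring
          rw [this]
          exact hg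
        obtain ⟨T2, T3, hT2, hT3, hprod⟩ :=
          lemma2 R (hrow 0) (hrow 1) (hrow 2) (Or.inl h01)
        refine ⟨[!![1,g,0; 0,1,g; 0,0,1], Nmat, T2, T3], by simp, ?_, ?_⟩
        · intro X hX
          simp only [List.mem_cons, List.not_mem_nil, or_false] at hX
          rcases hX with rfl | rfl | rfl | rfl
          exacts [isToeplitz_lit 1 g 0 0 0, isToeplitz_N, hT2, hT3]
        · simp only [List.prod_cons, List.prod_nil, Matrix.mul_one]
          rw [hprod, hRdef, ← Matrix.mul_assoc, hTS, Matrix.one_mul]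
    · -- transpose case
      have hdet' : Mᵀ.det = 0 := by rwa [Matrix.det_transpose]
      have hc' : ¬(Mᵀ 0 2 = 0 ∧ Mᵀ 1 2 = 0 ∧ Mᵀ 2 2 = 0) := by
        simpa [Matrix.transpose_apply] using hr
      obtain ⟨L, hlen, htoep, hprod⟩ := ML Mᵀ hdet' hc'
      refine ⟨(L.map Matrix.transpose).reverse, by simpa using hlen, ?_, ?_⟩
      · intro X hX
        simp only [List.mem_reverse, List.mem_map] at hX
        obtain ⟨A, hA, rfl⟩ := hX
        exact isToeplitz_transpose (htoep A hA)
      · rw [prod_reverse_map_transpose, hprod, Matrix.transpose_transpose]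
  · exact ML M hdet hc
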